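/- Let D be a positive non-square integer such that the continued fraction expansion of √D has a period of length 3 (i.e., √D = [a₀; \overline{a₁, a₂, a₃}] with a₃ = 2a₀ and a₂ = a₁). Then D is not divisible by any prime p with p ≡ 3 (mod 4). -/

import Mathlib

/-- Iterated Gauss map: `gaussIter x n` is the `n`-th complete quotient of the
continued fraction expansion of `x`. -/
noncomputable def gaussIter (x : ℝ) : ℕ → ℝ
  | 0 => x
  | n + 1 => (gaussIter x n - ⌊gaussIter x n⌋)⁻¹

/-- `cfCoeff x n` is the `n`-th partial quotient of the continued fraction of `x`. -/
noncomputable def cfCoeff (x : ℝ) (n : ℕ) : ℤ := ⌊gaussIter x n⌋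

/-- `IsPeriodicCF x k a` says that the continued fraction expansion of `x` is
`[a 0; a 1, …, a k, a 1, …, a k, …]`, i.e. `x = [a 0; \overline{a 1, …, a k}]`,
where the partial quotients `a 1, …, a k` are positive and `a k = 2 * a 0`. -/
def IsPeriodicCF (x : ℝ) (k : ℕ) (a : ℕ → ℤ) : Prop :=
  0 < a 0 ∧ (∀ i : ℕ, 1 ≤ i → i ≤ k → 0 < a i) ∧ a k = 2 * a 0 ∧
    cfCoeff x 0 = a 0 ∧ ∀ n : ℕ, 1 ≤ n → cfCoeff x n = a ((n - 1) % k + 1)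

lemma gaussIter_succ (x : ℝ) (n : ℕ) :
    gaussIter x (n+1) = (gaussIter x n - ⌊gaussIter x n⌋)⁻¹ := rfl

lemma gaussIter_add (x : ℝ) (k n : ℕ) :
    gaussIter x (k + n) = gaussIter (gaussIter x k) n := by
  induction n with
  | zero => rfl
  | succ n ih => rw [show k + (n+1) = (k+n)+1 by ring, gaussIter_succ, ih, gaussIter_succ]

lemma irrational_gaussIter {x : ℝ} (hx : Irrational x) : ∀ n, Irrational (gaussIter x n)
  | 0 => hx
  | n+1 => ((irrational_gaussIter hx n).sub_intCast _).inv

lemma cfCoeff_add (x : ℝ) (k n : ℕ) :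
    cfCoeff x (k + n) = cfCoeff (gaussIter x k) n := by
  unfold cfCoeff; rw [gaussIter_add]

lemma fract_pos_lt {x : ℝ} (hx : Irrational x) (n : ℕ) :
    0 < gaussIter x n - ⌊gaussIter x n⌋ ∧ gaussIter x n - ⌊gaussIter x n⌋ < 1 := by
  have hi := irrational_gaussIter hx n
  constructor
  · have h1 : (⌊gaussIter x n⌋ : ℝ) ≤ gaussIter x n := Int.floor_le _
    have h2 : gaussIter x n ≠ (⌊gaussIter x n⌋ : ℝ) := hi.ne_int _
    have := lt_of_le_of_ne h1 (Ne.symm h2)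
    linarith
  · have := Int.lt_floor_add_one (gaussIter x n)
    linarith

lemma one_lt_gaussIter {x : ℝ} (hx : Irrational x) (n : ℕ) :
    1 < gaussIter x (n+1) := by
  obtain ⟨h0, h1⟩ := fract_pos_lt hx n
  rw [gaussIter_succ, one_lt_inv_iff₀]
  exact ⟨h0, h1⟩

lemma gaussIter_eq_floor_add {x : ℝ} (hx : Irrational x) (n : ℕ) :
    gaussIter x n = (cfCoeff x n : ℝ) + (gaussIter x (n+1))⁻¹ := by
  obtain ⟨h0, _⟩ := fract_pos_lt hx n
  rw [gaussIter_succ, inv_inv, cfCoeff]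
  ring

lemma pair_bound {x : ℝ} (hx : Irrational x) (n : ℕ) :
    2 < gaussIter x (n+1) * gaussIter x (n+2) := by
  have h1 : 1 < gaussIter x (n+1) := one_lt_gaussIter hx n
  have h2 : 1 < gaussIter x (n+2) := one_lt_gaussIter hx (n+1)
  have he : gaussIter x (n+1) = (cfCoeff x (n+1) : ℝ) + (gaussIter x (n+2))⁻¹ :=
    gaussIter_eq_floor_add hx (n+1)
  have ha : (1 : ℤ) ≤ cfCoeff x (n+1) := by
    show (1:ℤ) ≤ ⌊gaussIter x (n+1)⌋
    exact Int.le_floor.mpr (by exact_mod_cast h1.le)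
  have haR : (1 : ℝ) ≤ (cfCoeff x (n+1) : ℝ) := by exact_mod_cast ha
  have hinv : (gaussIter x (n+2))⁻¹ * gaussIter x (n+2) = 1 :=
    inv_mul_cancel₀ (by linarith)
  nlinarith [inv_pos.mpr (show (0:ℝ) < gaussIter x (n+2) by linarith)]

/-- Uniqueness of continued fraction expansions for irrational numbers. -/
lemma cf_unique {x y : ℝ} (hx : Irrational x) (hy : Irrational y)
    (hc : ∀ n, cfCoeff x n = cfCoeff y n) : x = y := by
  by_contra hne
  have hS0 : 0 < |x - y| := abs_pos.mpr (sub_ne_zero.mpr hne)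
  -- the expansion formula
  have key : ∀ n, |gaussIter x n - gaussIter y n| =
      |x - y| * ∏ i ∈ Finset.range n, (gaussIter x (i+1) * gaussIter y (i+1)) := by
    intro n
    induction n with
    | zero => simp [gaussIter]
    | succ n ih =>
      have ex := gaussIter_eq_floor_add hx n
      have ey := gaussIter_eq_floor_add hy n
      rw [hc n] at ex
      set X := gaussIter x (n+1) with hX
      set Y := gaussIter y (n+1) with hY
      have hX1 : 1 < X := one_lt_gaussIter hx n
      have hY1 : 1 < Y := one_lt_gaussIter hy n
      have hsub : gaussIter x n - gaussIter y n = X⁻¹ - Y⁻¹ := by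
        rw [ex, ey]; ring
      have hXY : (0:ℝ) < X * Y := by nlinarith
      have hprod : (gaussIter x n - gaussIter y n) * (X * Y) = Y - X := by
        rw [hsub]
        field_simp
      have habs : |gaussIter x n - gaussIter y n| * (X * Y) = |X - Y| := by
        rw [← abs_of_pos hXY, ← abs_mul, hprod, abs_sub_comm]
      rw [Finset.prod_range_succ, ← mul_assoc, ← ih, habs]
  -- each difference is < 1
  have close : ∀ n, |gaussIter x n - gaussIter y n| < 1 := by
    intro n
    have ex := gaussIter_eq_floor_add hx n
    have ey := gaussIter_eq_floor_add hy n
    rw [hc n] at ex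
    have hX1 : 1 < gaussIter x (n+1) := one_lt_gaussIter hx n
    have hY1 : 1 < gaussIter y (n+1) := one_lt_gaussIter hy n
    have hXi : 0 < (gaussIter x (n+1))⁻¹ ∧ (gaussIter x (n+1))⁻¹ < 1 :=
      ⟨inv_pos.mpr (by linarith), inv_lt_one_of_one_lt₀ hX1⟩
    have hYi : 0 < (gaussIter y (n+1))⁻¹ ∧ (gaussIter y (n+1))⁻¹ < 1 :=
      ⟨inv_pos.mpr (by linarith), inv_lt_one_of_one_lt₀ hY1⟩
    rw [ex, ey, abs_sub_lt_iff]
    constructor <;> nlinarith [hXi.1, hXi.2, hYi.1, hYi.2]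
  -- product lower bound
  have prodbound : ∀ m, (4:ℝ)^m ≤
      ∏ i ∈ Finset.range (2*m), (gaussIter x (i+1) * gaussIter y (i+1)) := by
    intro m
    induction m with
    | zero => simp
    | succ m ih =>
      have h2m : 2*(m+1) = (2*m) + 1 + 1 := by ring
      rw [h2m, Finset.prod_range_succ, Finset.prod_range_succ]
      have px := pair_bound hx (2*m)
      have py := pair_bound hy (2*m)
      have hxp : ∀ i, (0:ℝ) < gaussIter x (i+1) * gaussIter y (i+1) := by
        intro i
        have := one_lt_gaussIter hx i
        have := one_lt_gaussIter hy i
        nlinarith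
      have hprodpos : (0:ℝ) < ∏ i ∈ Finset.range (2*m), (gaussIter x (i+1) * gaussIter y (i+1)) :=
        Finset.prod_pos (fun i _ => hxp i)
      have hx1 := one_lt_gaussIter hx (2*m)
      have hx2 := one_lt_gaussIter hx (2*m+1)
      have hy1 := one_lt_gaussIter hy (2*m)
      have hy2 := one_lt_gaussIter hy (2*m+1)
      have hfour : (4:ℝ) ≤ (gaussIter x (2*m+1) * gaussIter y (2*m+1)) *
          (gaussIter x (2*m+1+1) * gaussIter y (2*m+1+1)) := by
        nlinarith
      calc (4:ℝ)^(m+1) = 4^m * 4 := by ring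
        _ ≤ (∏ i ∈ Finset.range (2*m), (gaussIter x (i+1) * gaussIter y (i+1))) *
            ((gaussIter x (2*m+1) * gaussIter y (2*m+1)) *
             (gaussIter x (2*m+1+1) * gaussIter y (2*m+1+1))) := by
          apply mul_le_mul ih hfour (by norm_num) (le_of_lt hprodpos)
        _ = _ := by ring
  -- contradiction
  obtain ⟨m, hm⟩ := pow_unbounded_of_one_lt (|x - y|⁻¹) (show (1:ℝ) < 4 by norm_num)
  have h1 : |x - y| * 4^m > 1 := by
    rw [gt_iff_lt, ← inv_lt_iff_one_lt_mul₀' hS0]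
    exact hm
  have h2 := key (2*m)
  have h3 := close (2*m)
  have h4 : |x - y| * 4^m ≤ |x - y| *
      ∏ i ∈ Finset.range (2*m), (gaussIter x (i+1) * gaussIter y (i+1)) :=
    mul_le_mul_of_nonneg_left (prodbound m) (le_of_lt hS0)
  linarith [h2 ▸ h4]

/-- If `√D = [a₀; \overline{a₁, a₁, 2a₀}]` (period length 3), then `D` is not
divisible by any prime `p ≡ 3 (mod 4)`. -/
theorem sqrt_cf_period_three_not_dvd (D : ℕ) (hD : 0 < D) (hsq : ¬ IsSquare D)
    (a₀ a₁ : ℤ)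
    (h : IsPeriodicCF (Real.sqrt D) 3
      (fun n => if n = 0 then a₀ else if n ≤ 2 then a₁ else 2 * a₀)) :
    ∀ p : ℕ, p.Prime → p % 4 = 3 → ¬ p ∣ D := by
  obtain ⟨ha0, hpos, hak, hc0, hcn⟩ := h
  set u : ℝ := Real.sqrt D with hu
  have hirr : Irrational u := irrational_sqrt_natCast_iff.mpr hsq
  simp only at hc0 hcn
  have hc0' : cfCoeff u 0 = a₀ := by simpa using hc0
  have hc1 : cfCoeff u 1 = a₁ := by have := hcn 1 (by norm_num); norm_num at this; exact this
  have hc2 : cfCoeff u 2 = a₁ := by have := hcn 2 (by norm_num); norm_num at this; exact this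
  have hc3 : cfCoeff u 3 = 2 * a₀ := by have := hcn 3 (by norm_num); norm_num at this; exact this
  -- periodicity of tails: gaussIter u 4 = gaussIter u 1
  have hshift : ∀ n : ℕ, 1 ≤ n → cfCoeff u (n + 3) = cfCoeff u n := by
    intro n hn
    rw [hcn n hn, hcn (n+3) (by omega), show (n+3-1)%3 = (n-1)%3 by omega]
  have htail : gaussIter u 4 = gaussIter u 1 := by
    apply cf_unique (irrational_gaussIter hirr 4) (irrational_gaussIter hirr 1)
    intro n
    rw [← cfCoeff_add u 4 n, ← cfCoeff_add u 1 n]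
    have : 4 + n = (1 + n) + 3 := by ring
    rw [this, hshift (1+n) (by omega)]
  -- the complete quotients
  set t1 := gaussIter u 1 with ht1
  set t2 := gaussIter u 2 with ht2
  set t3 := gaussIter u 3 with ht3
  have h1 : 1 < t1 := one_lt_gaussIter hirr 0
  have h2 : 1 < t2 := one_lt_gaussIter hirr 1
  have h3 : 1 < t3 := one_lt_gaussIter hirr 2
  have e0 : u = (a₀ : ℝ) + t1⁻¹ := by
    have := gaussIter_eq_floor_add hirr 0
    rw [hc0'] at this
    exact this
  have e1 : t1 = (a₁ : ℝ) + t2⁻¹ := by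
    have := gaussIter_eq_floor_add hirr 1
    rw [hc1] at this
    exact this
  have e2 : t2 = (a₁ : ℝ) + t3⁻¹ := by
    have := gaussIter_eq_floor_add hirr 2
    rw [hc2] at this
    exact this
  have e3 : t3 = (2 * a₀ : ℤ) + t1⁻¹ := by
    have := gaussIter_eq_floor_add hirr 3
    rw [hc3, show (3:ℕ)+1 = 4 from rfl, htail] at this
    exact this
  have hu2 : u^2 = (D : ℝ) := Real.sq_sqrt (by positivity)
  -- derive the key identity over ℝ
  have ht1ne : t1 ≠ 0 := by linarith
  have ht2ne : t2 ≠ 0 := by linarith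
  have ht3ne : t3 ≠ 0 := by linarith
  have hut : u - a₀ = t1⁻¹ := by rw [e0]; ring
  have ht3u : t3 = a₀ + u := by
    rw [e3, ← hut]
    push_cast
    ring
  have keyR : ((a₁:ℝ)^2 + 1) * D = ((a₀:ℝ)*a₁ + 1)^2 + (a₀:ℝ)^2 := by
    have hinv1 : t1⁻¹ * t1 = 1 := inv_mul_cancel₀ ht1ne
    have hinv2 : t2⁻¹ * t2 = 1 := inv_mul_cancel₀ ht2ne
    have hinv3 : t3⁻¹ * t3 = 1 := inv_mul_cancel₀ ht3ne
    -- polynomial equations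
    have E1 : t1 * (u - a₀) = 1 := by rw [hut]; field_simp
    have E2 : t2 * (t1 - a₁) = 1 := by
      have : t1 - a₁ = t2⁻¹ := by rw [e1]; ring
      rw [this]; field_simp
    have E3 : t3 * (t2 - a₁) = 1 := by
      have : t2 - a₁ = t3⁻¹ := by rw [e2]; ring
      rw [this]; field_simp
    have E3' : ((a₀:ℝ) + u) * (t2 - a₁) = 1 := by rw [← ht3u]; exact E3
    have G1 : (1 + (a₁:ℝ)*(a₀+u)) * (t1 - a₁) = (a₀:ℝ) + u := by
      linear_combination ((a₀:ℝ)+u)*E2 - (t1 - (a₁:ℝ))*E3'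
    have key0 : ((a₁:ℝ)^2+1) * u^2 = ((a₀:ℝ)*a₁+1)^2 + (a₀:ℝ)^2 := by
      linear_combination ((a₀:ℝ) - u)*G1 + (1 + (a₁:ℝ)*((a₀:ℝ)+u))*E1
    linear_combination key0 - ((a₁:ℝ)^2+1)*hu2
  -- transfer to ℤ
  have keyZ : (a₁^2 + 1) * (D : ℤ) = (a₀*a₁ + 1)^2 + a₀^2 := by
    have := keyR
    exact_mod_cast this
  -- final arithmetic
  intro p pp hp3 hdvd
  haveI : Fact p.Prime := ⟨pp⟩
  have hDz : ((D : ℕ) : ZMod p) = 0 := (ZMod.natCast_eq_zero_iff _ _).mpr hdvd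
  have hzm : ((a₀*a₁ + 1 : ℤ) : ZMod p)^2 + ((a₀ : ℤ) : ZMod p)^2 = 0 := by
    have h' := congrArg (fun z : ℤ => (z : ZMod p)) keyZ
    push_cast at h' ⊢
    rw [hDz] at h'
    linear_combination -h' 
  set A : ZMod p := ((a₀*a₁ + 1 : ℤ) : ZMod p) with hA
  set B : ZMod p := ((a₀ : ℤ) : ZMod p) with hB
  have hns : ¬ IsSquare (-1 : ZMod p) := by
    rw [ZMod.exists_sq_eq_neg_one_iff]
    simp [hp3]
  by_cases hBz : B = 0
  · have hA1 : A = 1 := by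
      rw [hA]
      push_cast
      rw [show ((a₀ : ℤ) : ZMod p) = 0 from hBz]
      ring
    rw [hA1, hBz] at hzm
    norm_num at hzm
  · apply hns
    refine ⟨A * B⁻¹, ?_⟩
    have hB2 : B * B⁻¹ = 1 := mul_inv_cancel₀ hBz
    have hA2 : A^2 = -B^2 := by linear_combination hzm
    field_simp
    linear_combination -hzm
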